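/- For α > 0 and 0 < x < x₀, the identity ∫₀^∞ e^{-αt} ∫_{x₀}^∞ y·(e^{-(y-x)²/(2t)} − e^{-(y+x)²/(2t)})/√(2πt) dy dt = (1/α)·(1/(2√(2α)) + x₀/2)·e^{-√(2α)x₀}·(e^{√(2α)x} − e^{-√(2α)x}) holds. -/

import Mathlib

open MeasureTheory Real Set

set_option linter.unreachableTactic false
set_option linter.unusedTactic false
set_option maxHeartbeats 1000000


lemma inv_img (c : ℝ) (hc : 0 < c) : (fun u : ℝ => c / u) '' Ioi 0 = Ioi 0 := by
  ext w
  constructor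
  · rintro ⟨u, hu, rfl⟩
    exact div_pos hc hu
  · intro hw
    exact ⟨c / w, div_pos hc hw, by field_simp⟩

lemma inv_deriv (c : ℝ) : ∀ u ∈ Ioi (0:ℝ), HasDerivWithinAt (fun v => c/v) (-(c/u^2)) (Ioi 0) u := by
  intro u hu
  have h := ((hasDerivAt_inv (ne_of_gt hu)).const_mul c)
  simpa [div_eq_mul_inv, mul_comm] using h.hasDerivWithinAt

lemma cInv_inj (c : ℝ) (hc : 0 < c) : InjOn (fun v : ℝ => c/v) (Ioi 0) := by
  intro u hu v hv h
  simp only [mem_Ioi] at hu hv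
  field_simp at h
  rcases h with h | h
  all_goals first
    | exact h.symm
    | exact absurd h (ne_of_gt hc)
    | exact absurd h.symm (ne_of_gt hc)
    | exact h
    | rfl

lemma sub_deriv (c : ℝ) : ∀ u ∈ Ioi (0:ℝ), HasDerivWithinAt (fun v => v - c/v) (1 + c/u^2) (Ioi 0) u := by
  intro u hu
  have h := (hasDerivAt_id u).sub (((hasDerivAt_inv (ne_of_gt hu)).const_mul c))
  have h2 : (fun v : ℝ => v - c/v) = fun v => id v - c * v⁻¹ := by
    ext v; rw [div_eq_mul_inv]; rfl
  rw [h2]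
  have h3 : 1 + c/u^2 = 1 - c * -(u^2)⁻¹ := by ring
  rw [h3]
  exact h.hasDerivWithinAt

lemma sub_inj (c : ℝ) (hc : 0 < c) : InjOn (fun v : ℝ => v - c/v) (Ioi 0) := by
  intro u hu v hv h
  simp only [mem_Ioi] at hu hv
  simp only at h
  have e1 : c/u * u = c := div_mul_cancel₀ c (ne_of_gt hu)
  have e2 : c/v * v = c := div_mul_cancel₀ c (ne_of_gt hv)
  have key : (u - v) * (u*v + c) = 0 := by linear_combination u*v*h + v*e1 - u*e2
  have h2 : u*v + c > 0 := by positivity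
  have := mul_eq_zero.mp key
  rcases this with h3 | h3
  · linarith
  · linarith


lemma sub_img (c : ℝ) (hc : 0 < c) : (fun u : ℝ => u - c / u) '' Ioi 0 = univ := by
  ext w
  simp only [mem_univ, iff_true, mem_image, mem_Ioi]
  have h1 : |w| < Real.sqrt (w^2 + 4*c) := by
    rw [← Real.sqrt_sq_eq_abs]
    exact Real.sqrt_lt_sqrt (sq_nonneg w) (by linarith)
  have h2 := neg_abs_le w
  have h3 := le_abs_self w
  have hu : 0 < (w + Real.sqrt (w^2 + 4*c)) / 2 := by linarith
  refine ⟨(w + Real.sqrt (w^2 + 4*c)) / 2, hu, ?_⟩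
  have hs : Real.sqrt (w^2 + 4*c) ^ 2 = w^2 + 4*c := Real.sq_sqrt (by positivity)
  have key : c / ((w + Real.sqrt (w^2 + 4*c)) / 2) = (w + Real.sqrt (w^2 + 4*c)) / 2 - w := by
    rw [div_eq_iff hu.ne']
    nlinarith [hs]
  rw [key]; ring

lemma glaisher_integrable (c : ℝ) (hc : 0 < c) :
    IntegrableOn (fun u : ℝ => Real.exp (-(u - c/u)^2)) (Ioi 0) := by
  apply Integrable.mono' (((integrable_exp_neg_mul_sq one_pos).const_mul
    (Real.exp (2*c))).integrableOn (s := Ioi 0))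
  · refine Measurable.aestronglyMeasurable ?_
    exact Real.measurable_exp.comp
      (((measurable_id.sub (measurable_const.div measurable_id)).pow_const 2).neg)
  · rw [ae_restrict_iff' measurableSet_Ioi]
    filter_upwards with u
    intro hu
    simp only [mem_Ioi] at hu
    rw [Real.norm_eq_abs, Real.abs_exp, ← Real.exp_add, Real.exp_le_exp]
    have h1 : u * (c/u) = c := mul_div_cancel₀ c (ne_of_gt hu)
    nlinarith [sq_nonneg (c/u), sq_nonneg (u - c/u)]

lemma glaisher (c : ℝ) (hc : 0 < c) :
    ∫ u in Ioi (0:ℝ), Real.exp (-(u^2 + c^2/u^2))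
      = Real.sqrt π / 2 * Real.exp (-(2*c)) := by
  set J := ∫ u in Ioi (0:ℝ), Real.exp (-(u - c/u)^2) with hJ
  have hint1 := glaisher_integrable c hc
  -- J via substitution u ↦ c/u
  have step_a : J = ∫ u in Ioi (0:ℝ), (c/u^2) * Real.exp (-(u - c/u)^2) := by
    have h := integral_image_eq_integral_abs_deriv_smul measurableSet_Ioi
      (inv_deriv c) (cInv_inj c hc) (fun w => Real.exp (-(w - c/w)^2))
    rw [inv_img c hc] at h
    rw [hJ, h]
    apply setIntegral_congr_fun measurableSet_Ioi
    intro u hu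
    simp only [mem_Ioi] at hu
    have h1 : |(-(c/u^2))| = c/u^2 := by rw [abs_neg, abs_of_pos (by positivity)]
    have h2 : c/(c/u) = u := by field_simp
    simp only [smul_eq_mul, h1, h2]
    congr 1
    ring
  have hint2 : IntegrableOn (fun u : ℝ => (c/u^2) * Real.exp (-(u - c/u)^2)) (Ioi 0) := by
    have h := (integrableOn_image_iff_integrableOn_abs_deriv_smul measurableSet_Ioi
      (inv_deriv c) (cInv_inj c hc) (fun w => Real.exp (-(w - c/w)^2))).mp
      (by rw [inv_img c hc]; exact hint1)
    apply h.congr_fun ?_ measurableSet_Ioi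
    intro u hu
    simp only [mem_Ioi] at hu
    have h1 : |(-(c/u^2))| = c/u^2 := by rw [abs_neg, abs_of_pos (by positivity)]
    have h2 : c/(c/u) = u := by field_simp
    simp only [smul_eq_mul, h1, h2]
    congr 1
    ring
  -- substitution w = u - c/u
  have step_c : ∫ u in Ioi (0:ℝ), (1 + c/u^2) * Real.exp (-(u - c/u)^2) = Real.sqrt π := by
    have h := integral_image_eq_integral_abs_deriv_smul measurableSet_Ioi
      (sub_deriv c) (sub_inj c hc) (fun w => Real.exp (-w^2))
    rw [sub_img c hc] at h
    have heq : ∫ u in Ioi (0:ℝ), (1 + c/u^2) * Real.exp (-(u - c/u)^2)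
        = ∫ u in Ioi (0:ℝ), |1 + c/u^2| • Real.exp (-(u - c/u)^2) := by
      apply setIntegral_congr_fun measurableSet_Ioi
      intro u hu
      simp only [mem_Ioi] at hu
      show (1 + c/u^2) * Real.exp (-(u - c/u)^2) = |1 + c/u^2| • Real.exp (-(u - c/u)^2)
      rw [smul_eq_mul, abs_of_pos (by positivity)]
    rw [heq, ← h, Measure.restrict_univ]
    simpa using integral_gaussian 1
  have hJval : J = Real.sqrt π / 2 := by
    have hsum : J + J = Real.sqrt π := by
      nth_rewrite 2 [step_a]
      rw [hJ, ← integral_add hint1 hint2, ← step_c]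
      apply setIntegral_congr_fun measurableSet_Ioi
      intro u hu
      ring
    linarith
  calc ∫ u in Ioi (0:ℝ), Real.exp (-(u^2 + c^2/u^2))
      = ∫ u in Ioi (0:ℝ), Real.exp (-(2*c)) * Real.exp (-(u - c/u)^2) := by
        apply setIntegral_congr_fun measurableSet_Ioi
        intro u hu
        simp only [mem_Ioi] at hu
        show Real.exp (-(u^2 + c^2/u^2)) = Real.exp (-(2*c)) * Real.exp (-(u - c/u)^2)
        rw [← Real.exp_add]
        congr 1
        have h1 : (u - c/u)^2 = u^2 - 2*c + c^2/u^2 := by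
          field_simp
          ring
        linarith
    _ = Real.exp (-(2*c)) * J := by rw [hJ, integral_const_mul]
    _ = Real.sqrt π / 2 * Real.exp (-(2*c)) := by rw [hJval]; ring


lemma glaisher_integrable' (c : ℝ) (hc : 0 < c) :
    IntegrableOn (fun u : ℝ => Real.exp (-(u^2 + c^2/u^2))) (Ioi 0) := by
  apply ((glaisher_integrable c hc).const_mul (Real.exp (-(2*c)))).congr
  filter_upwards [ae_restrict_mem measurableSet_Ioi] with u hu
  simp only [mem_Ioi] at hu
  show Real.exp (-(2*c)) * Real.exp (-(u - c/u)^2) = Real.exp (-(u^2 + c^2/u^2))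
  rw [← Real.exp_add]
  congr 1
  have h1 : (u - c/u)^2 = u^2 - 2*c + c^2/u^2 := by
    field_simp
    ring
  linarith

lemma heat_img (α : ℝ) (hα : 0 < α) : (fun v : ℝ => v^2/α) '' Ioi 0 = Ioi 0 := by
  ext t
  constructor
  · rintro ⟨v, hv, rfl⟩
    exact div_pos (pow_pos hv 2) hα
  · intro ht
    simp only [mem_Ioi] at ht
    refine ⟨Real.sqrt (α*t), Real.sqrt_pos.mpr (by positivity), ?_⟩
    simp only
    rw [Real.sq_sqrt (by positivity)]
    field_simp

lemma heat_deriv (α : ℝ) : ∀ v ∈ Ioi (0:ℝ), HasDerivWithinAt (fun v : ℝ => v^2/α) (2*v/α) (Ioi 0) v := by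
  intro v hv
  have h := (hasDerivAt_pow 2 v).div_const α
  simpa using h.hasDerivWithinAt

lemma heat_inj (α : ℝ) (hα : 0 < α) : InjOn (fun v : ℝ => v^2/α) (Ioi 0) := by
  intro u hu v hv h
  simp only [mem_Ioi] at hu hv
  simp only [div_eq_div_iff (ne_of_gt hα) (ne_of_gt hα)] at h
  have h2 : u^2 = v^2 := mul_right_cancel₀ (ne_of_gt hα) h
  have h3 : (u - v) * (u + v) = 0 := by linear_combination h2
  rcases mul_eq_zero.mp h3 with h4 | h4
  · linarith
  · linarith


lemma heat_key (α a : ℝ) (hα : 0 < α) (ha : 0 < a) :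
    ∀ u ∈ Ioi (0:ℝ),
      |2*u/α| • (Real.exp (-α*(u^2/α)) * Real.exp (-a^2/(2*(u^2/α))) / Real.sqrt (2*π*(u^2/α)))
        = (2/(α * Real.sqrt (2*π/α))) * Real.exp (-(u^2 + (a * Real.sqrt (2*α) / 2)^2/u^2)) := by
  set β := Real.sqrt (2*α) with hβ
  have hβpos : 0 < β := Real.sqrt_pos.mpr (by positivity)
  have hβ2 : β^2 = 2*α := Real.sq_sqrt (by positivity)
  set c := a * β / 2 with hc
  have hcpos : 0 < c := by positivity
  have hc2 : c^2 = a^2*α/2 := by rw [hc, div_pow, mul_pow, hβ2]; ring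
  intro u hu
  simp only [mem_Ioi] at hu
  have h1 : -α*(u^2/α) = -u^2 := by field_simp
  have h2 : -a^2/(2*(u^2/α)) = -(c^2/u^2) := by
    rw [hc2]
    field_simp
  have h3 : Real.sqrt (2*π*(u^2/α)) = u * Real.sqrt (2*π/α) := by
    rw [show 2*π*(u^2/α) = u^2 * (2*π/α) by ring, Real.sqrt_mul (sq_nonneg u),
      Real.sqrt_sq hu.le]
  rw [h1, h2, h3, smul_eq_mul, abs_of_pos (by positivity), ← Real.exp_add]
  have : -u^2 + -(c^2/u^2) = -(u^2 + c^2/u^2) := by ring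
  rw [this]
  field_simp

/-- Laplace transform of the heat kernel. -/
lemma heat_laplace (α a : ℝ) (hα : 0 < α) (ha : 0 < a) :
    ∫ t in Ioi (0:ℝ), Real.exp (-α*t) * Real.exp (-a^2/(2*t)) / Real.sqrt (2*π*t)
      = Real.exp (-(Real.sqrt (2*α)) * a) / Real.sqrt (2*α) := by
  set β := Real.sqrt (2*α) with hβ
  have hβpos : 0 < β := Real.sqrt_pos.mpr (by positivity)
  have hβ2 : β^2 = 2*α := Real.sq_sqrt (by positivity)
  set c := a * β / 2 with hc
  have hcpos : 0 < c := by positivity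
  have hc2 : c^2 = a^2*α/2 := by rw [hc, div_pow, mul_pow, hβ2]; ring
  -- pointwise identity for the transformed integrand
  have key := heat_key α a hα ha
  have himg := integral_image_eq_integral_abs_deriv_smul measurableSet_Ioi
    (heat_deriv α) (heat_inj α hα) (fun t => Real.exp (-α*t) * Real.exp (-a^2/(2*t)) / Real.sqrt (2*π*t))
  rw [heat_img α hα] at himg
  rw [himg]
  rw [setIntegral_congr_fun measurableSet_Ioi (g := fun u =>
    (2/(α * Real.sqrt (2*π/α))) * Real.exp (-(u^2 + c^2/u^2))) (fun u hu => key u hu)]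
  rw [integral_const_mul, glaisher c hcpos]
  -- final arithmetic
  have hconst : α * Real.sqrt (2*π/α) = β * Real.sqrt π := by
    have e1 : 2*π/α = ((2*α)*π)/α^2 := by field_simp
    rw [e1, Real.sqrt_div (by positivity) (α^2), Real.sqrt_mul (by positivity) π,
      Real.sqrt_sq hα.le, ← hβ]
    field_simp
  have h2c : -(2*c) = -β*a := by rw [hc]; ring
  rw [h2c, hconst]
  have hsπ : (0:ℝ) < Real.sqrt π := Real.sqrt_pos.mpr Real.pi_pos
  field_simp

lemma heat_laplace_integrable (α a : ℝ) (hα : 0 < α) (ha : 0 < a) :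
    IntegrableOn (fun t : ℝ => Real.exp (-α*t) * Real.exp (-a^2/(2*t)) / Real.sqrt (2*π*t))
      (Ioi 0) := by
  have h := integrableOn_image_iff_integrableOn_abs_deriv_smul measurableSet_Ioi
    (heat_deriv α) (heat_inj α hα)
    (fun t => Real.exp (-α*t) * Real.exp (-a^2/(2*t)) / Real.sqrt (2*π*t))
  rw [heat_img α hα] at h
  rw [h]
  have hcpos : 0 < a * Real.sqrt (2*α) / 2 := by
    have : 0 < Real.sqrt (2*α) := Real.sqrt_pos.mpr (by positivity)
    positivity
  apply ((glaisher_integrable' (a * Real.sqrt (2*α) / 2) hcpos).const_mul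
    (2/(α * Real.sqrt (2*π/α)))).congr
  filter_upwards [ae_restrict_mem measurableSet_Ioi] with u hu
  exact (heat_key α a hα ha u hu).symm

lemma mul_exp_le (k y : ℝ) (hk : 0 < k) (hy : 0 ≤ y) :
    y * Real.exp (-k*y) ≤ (2/k) * Real.exp (-(k/2)*y) := by
  have hv : k*y/2 ≤ Real.exp (k*y/2) := by
    have := Real.add_one_le_exp (k*y/2)
    linarith
  have h1 : y * Real.exp (-k*y) = (2/k) * (k*y/2) * Real.exp (-k*y) := by field_simp
  rw [h1]
  have h2 : (2/k) * (k*y/2) * Real.exp (-k*y) ≤ (2/k) * Real.exp (k*y/2) * Real.exp (-k*y) := by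
    apply mul_le_mul_of_nonneg_right _ (Real.exp_nonneg _)
    apply mul_le_mul_of_nonneg_left hv (by positivity)
  apply h2.trans
  rw [mul_assoc, ← Real.exp_add]
  apply le_of_eq
  congr 2
  ring

lemma integrableOn_mul_exp (k a : ℝ) (hk : 0 < k) (ha : 0 ≤ a) :
    IntegrableOn (fun y : ℝ => y * Real.exp (-k*y)) (Ioi a) := by
  apply Integrable.mono' (((exp_neg_integrableOn_Ioi a (half_pos hk))).const_mul (2/k))
  · exact (measurable_id.mul (Real.measurable_exp.comp (measurable_const.mul measurable_id))).aestronglyMeasurable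
  · filter_upwards [ae_restrict_mem measurableSet_Ioi] with y hy
    simp only [mem_Ioi] at hy
    have hy0 : 0 ≤ y := le_trans ha hy.le
    rw [Real.norm_eq_abs, abs_of_nonneg (by positivity)]
    have := mul_exp_le k y hk hy0
    calc y * Real.exp (-k*y) ≤ (2/k) * Real.exp (-(k/2)*y) := this
      _ = 2/k * Real.exp (-(k/2)*y) := by ring

lemma integral_mul_exp (k a : ℝ) (hk : 0 < k) (ha : 0 ≤ a) :
    ∫ y in Ioi a, y * Real.exp (-k*y) = (a/k + 1/k^2) * Real.exp (-k*a) := by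
  have hderiv : ∀ y ∈ Ici a, HasDerivAt (fun y => -((y/k + 1/k^2) * Real.exp (-k*y)))
      (y * Real.exp (-k*y)) y := by
    intro y _
    have h1 : HasDerivAt (fun y : ℝ => -k*y) (-k) y := by
      simpa using (hasDerivAt_id y).const_mul (-k)
    have h2 : HasDerivAt (fun y : ℝ => Real.exp (-k*y)) (Real.exp (-k*y) * (-k)) y := h1.exp
    have h3 : HasDerivAt (fun y : ℝ => y/k + 1/k^2) (1/k) y := by
      have := ((hasDerivAt_id y).div_const k).add_const (1/k^2)
      simpa using this.congr_deriv (by simp)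
    have h4 := (h3.mul h2).neg
    refine h4.congr_deriv ?_
    field_simp
    ring
  have hlim : Filter.Tendsto (fun y => -((y/k + 1/k^2) * Real.exp (-k*y))) Filter.atTop (nhds 0) := by
    have comp : Filter.Tendsto (fun z : ℝ => (z + 1) * Real.exp (-z)) Filter.atTop (nhds 0) := by
      have h1 : Filter.Tendsto (fun z : ℝ => z * Real.exp (-z)) Filter.atTop (nhds 0) := by
        simpa using Real.tendsto_pow_mul_exp_neg_atTop_nhds_zero 1
      have h2 : Filter.Tendsto (fun z : ℝ => Real.exp (-z)) Filter.atTop (nhds 0) :=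
        Real.tendsto_exp_neg_atTop_nhds_zero
      simpa [add_mul, one_mul] using h1.add h2
    have hz : Filter.Tendsto (fun y : ℝ => k*y) Filter.atTop Filter.atTop :=
      Filter.Tendsto.const_mul_atTop hk Filter.tendsto_id
    have heq : (fun y : ℝ => -((y/k + 1/k^2) * Real.exp (-k*y)))
        = fun y => -(1/k^2) * ((k*y + 1) * Real.exp (-(k*y))) := by
      ext y
      field_simp
    rw [heq]
    have := (comp.comp hz).const_mul (-(1/k^2))
    simpa using this
  have hmain := integral_Ioi_of_hasDerivAt_of_tendsto' hderiv (integrableOn_mul_exp k a hk ha) hlim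
  rw [hmain]
  ring


lemma inner_nonneg (x t y : ℝ) (hx : 0 < x) (ht : 0 < t) (hy : 0 < y) :
    0 ≤ y * (Real.exp (-(y-x)^2/(2*t)) - Real.exp (-(y+x)^2/(2*t))) / Real.sqrt (2*π*t) := by
  apply div_nonneg _ (Real.sqrt_nonneg _)
  apply mul_nonneg hy.le
  rw [sub_nonneg, Real.exp_le_exp]
  have h2t : (0:ℝ) < 2*t := by linarith
  rw [div_le_div_iff₀ h2t h2t]
  nlinarith [mul_pos hy hx, ht]

lemma piece_integrable (t x a0 : ℝ) (ht : 0 < t) (hx : 0 < x) (hx0 : x < a0) :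
    IntegrableOn (fun y : ℝ => y * Real.exp (-(y-x)^2/(2*t))) (Ioi a0) := by
  have ha0 : 0 < a0 := lt_trans hx hx0
  set d := a0 - x with hd
  have hdpos : 0 < d := by simp [hd]; linarith
  set k := d/(2*t) with hk
  have hkpos : 0 < k := by positivity
  apply Integrable.mono' ((integrableOn_mul_exp k a0 hkpos ha0.le).const_mul
    (Real.exp (k*x)))
  · exact (measurable_id.mul (Real.measurable_exp.comp (by measurability))).aestronglyMeasurable
  · filter_upwards [ae_restrict_mem measurableSet_Ioi] with y hy
    simp only [mem_Ioi] at hy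
    have hy0 : 0 < y := lt_trans ha0 hy
    rw [Real.norm_eq_abs, abs_of_nonneg (by positivity)]
    have key : Real.exp (-(y-x)^2/(2*t)) ≤ Real.exp (k*x) * Real.exp (-k*y) := by
      rw [← Real.exp_add, Real.exp_le_exp]
      have he : k*x + -k*y = (d*x - d*y)/(2*t) := by rw [hk]; ring
      rw [he, div_le_div_iff₀ (by positivity) (by positivity)]
      nlinarith [mul_nonneg (mul_nonneg (sub_nonneg.mpr (by linarith : d ≤ y - x))
        (by linarith : (0:ℝ) ≤ y - x)) (by linarith : (0:ℝ) ≤ 2*t)]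
    calc y * Real.exp (-(y-x)^2/(2*t)) ≤ y * (Real.exp (k*x) * Real.exp (-k*y)) := by
          apply mul_le_mul_of_nonneg_left key hy0.le
      _ = Real.exp (k*x) * (y * Real.exp (-k*y)) := by ring

lemma piece_integrable' (t x a0 : ℝ) (ht : 0 < t) (hx : 0 < x) (hx0 : x < a0) :
    IntegrableOn (fun y : ℝ => y * Real.exp (-(y+x)^2/(2*t))) (Ioi a0) := by
  have ha0 : 0 < a0 := lt_trans hx hx0
  apply Integrable.mono' (piece_integrable t x a0 ht hx hx0)
  · exact (measurable_id.mul (Real.measurable_exp.comp (by measurability))).aestronglyMeasurable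
  · filter_upwards [ae_restrict_mem measurableSet_Ioi] with y hy
    simp only [mem_Ioi] at hy
    have hy0 : 0 < y := lt_trans ha0 hy
    rw [Real.norm_eq_abs, abs_of_nonneg (by positivity)]
    apply mul_le_mul_of_nonneg_left _ hy0.le
    rw [Real.exp_le_exp, div_le_div_iff₀ (by positivity) (by positivity)]
    nlinarith [mul_pos hy0 hx, ht]

lemma inner_integrable (t x x₀ : ℝ) (ht : 0 < t) (hx : 0 < x) (hxx₀ : x < x₀) :
    IntegrableOn (fun y : ℝ =>
      y * (Real.exp (-(y-x)^2/(2*t)) - Real.exp (-(y+x)^2/(2*t))) / Real.sqrt (2*π*t))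
      (Ioi x₀) := by
  have h := ((piece_integrable t x x₀ ht hx hxx₀).sub
    (piece_integrable' t x x₀ ht hx hxx₀)).div_const (Real.sqrt (2*π*t))
  apply h.congr
  filter_upwards with y
  show (y * Real.exp (-(y-x)^2/(2*t)) - y * Real.exp (-(y+x)^2/(2*t))) / Real.sqrt (2*π*t)
    = y * (Real.exp (-(y-x)^2/(2*t)) - Real.exp (-(y+x)^2/(2*t))) / Real.sqrt (2*π*t)
  ring

theorem stmt15 (α x x₀ : ℝ) (hα : 0 < α) (hx : 0 < x) (hxx₀ : x < x₀) :
    ∫ t in Ioi (0:ℝ), Real.exp (-α * t) *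
        ∫ y in Ioi x₀,
          y * (Real.exp (-(y - x) ^ 2 / (2 * t)) - Real.exp (-(y + x) ^ 2 / (2 * t)))
            / Real.sqrt (2 * π * t)
      = (1 / α) * (1 / (2 * Real.sqrt (2 * α)) + x₀ / 2)
          * Real.exp (-Real.sqrt (2 * α) * x₀)
          * (Real.exp (Real.sqrt (2 * α) * x) - Real.exp (-Real.sqrt (2 * α) * x)) := by
  have hβpos : 0 < Real.sqrt (2*α) := Real.sqrt_pos.mpr (by positivity)
  have hβ2 : Real.sqrt (2*α)^2 = 2*α := Real.sq_sqrt (by positivity)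
  have hx₀ : 0 < x₀ := lt_trans hx hxx₀
  set F : ℝ → ℝ → ℝ := fun t y => Real.exp (-α * t) *
    (y * (Real.exp (-(y - x) ^ 2 / (2 * t)) - Real.exp (-(y + x) ^ 2 / (2 * t)))
      / Real.sqrt (2 * π * t)) with hF
  have hmF : Measurable (Function.uncurry F) := by
    apply Measurable.mul
    · exact Real.measurable_exp.comp (measurable_const.mul measurable_fst)
    · apply Measurable.div
      · apply Measurable.mul measurable_snd
        apply Measurable.sub
        · exact Real.measurable_exp.comp
            (((measurable_snd.sub measurable_const).pow_const 2).neg.div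
              (measurable_const.mul measurable_fst))
        · exact Real.measurable_exp.comp
            (((measurable_snd.add measurable_const).pow_const 2).neg.div
              (measurable_const.mul measurable_fst))
      · exact Real.continuous_sqrt.measurable.comp (measurable_const.mul measurable_fst)
  set φ : ℝ → ℝ := fun y => y * (Real.exp (-Real.sqrt (2*α)*(y-x))/Real.sqrt (2*α)
    - Real.exp (-Real.sqrt (2*α)*(y+x))/Real.sqrt (2*α)) with hφ
  -- per-y integrability in t
  have ht_int : ∀ y ∈ Ioi x₀, IntegrableOn (fun t => F t y) (Ioi 0) := by
    intro y hy
    simp only [mem_Ioi] at hy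
    have ha1 : 0 < y - x := by linarith
    have ha2 : 0 < y + x := by linarith
    have h1 := heat_laplace_integrable α (y-x) hα ha1
    have h2 := heat_laplace_integrable α (y+x) hα ha2
    apply ((h1.sub h2).const_mul y).congr
    filter_upwards with t
    show y * (Real.exp (-α*t) * Real.exp (-(y-x)^2/(2*t)) / Real.sqrt (2*π*t)
        - Real.exp (-α*t) * Real.exp (-(y+x)^2/(2*t)) / Real.sqrt (2*π*t)) = F t y
    rw [hF]
    ring
  -- per-y value of t-integral
  have ht_val : ∀ y ∈ Ioi x₀, (∫ t in Ioi 0, F t y) = φ y := by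
    intro y hy
    simp only [mem_Ioi] at hy
    have ha1 : 0 < y - x := by linarith
    have ha2 : 0 < y + x := by linarith
    have h1 := heat_laplace_integrable α (y-x) hα ha1
    have h2 := heat_laplace_integrable α (y+x) hα ha2
    have e : (fun t => F t y) = fun t => y *
        ((fun t => Real.exp (-α*t) * Real.exp (-(y-x)^2/(2*t)) / Real.sqrt (2*π*t)) t
          - (fun t => Real.exp (-α*t) * Real.exp (-(y+x)^2/(2*t)) / Real.sqrt (2*π*t)) t) := by
      funext t
      show F t y = _
      rw [hF]
      ring
    rw [e, integral_const_mul, integral_sub h1 h2,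
      heat_laplace α (y-x) hα ha1, heat_laplace α (y+x) hα ha2]
  -- φ facts
  have hφ_eq : ∀ y ∈ Ioi x₀, φ y = ((Real.exp (Real.sqrt (2*α)*x)
      - Real.exp (-Real.sqrt (2*α)*x))/Real.sqrt (2*α)) * (y * Real.exp (-Real.sqrt (2*α)*y)) := by
    intro y _
    have e1 : Real.exp (-Real.sqrt (2*α)*(y-x))
        = Real.exp (Real.sqrt (2*α)*x) * Real.exp (-Real.sqrt (2*α)*y) := by
      rw [← Real.exp_add]; ring_nf
    have e2 : Real.exp (-Real.sqrt (2*α)*(y+x))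
        = Real.exp (-Real.sqrt (2*α)*x) * Real.exp (-Real.sqrt (2*α)*y) := by
      rw [← Real.exp_add]; ring_nf
    rw [hφ]
    show y * _ = _
    rw [e1, e2]
    ring
  have hφ_int : IntegrableOn φ (Ioi x₀) := by
    apply (((integrableOn_mul_exp (Real.sqrt (2*α)) x₀ hβpos hx₀.le).const_mul
      ((Real.exp (Real.sqrt (2*α)*x) - Real.exp (-Real.sqrt (2*α)*x))/Real.sqrt (2*α)))).congr
    filter_upwards [ae_restrict_mem measurableSet_Ioi] with y hy
    exact (hφ_eq y hy).symm
  have hφ_nonneg : 0 ≤ᵐ[volume.restrict (Ioi x₀)] φ := by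
    filter_upwards [ae_restrict_mem measurableSet_Ioi] with y hy
    rw [hφ_eq y hy]
    have hy0 : 0 < y := lt_trans hx₀ hy
    have : Real.exp (-Real.sqrt (2*α)*x) ≤ Real.exp (Real.sqrt (2*α)*x) := by
      apply Real.exp_le_exp.mpr
      nlinarith
    have hy0' : 0 ≤ y * Real.exp (-Real.sqrt (2*α)*y) := by positivity
    exact mul_nonneg (div_nonneg (by linarith) hβpos.le) hy0'
  have hφ_val : ∫ y in Ioi x₀, φ y = ((Real.exp (Real.sqrt (2*α)*x)
      - Real.exp (-Real.sqrt (2*α)*x))/Real.sqrt (2*α))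
      * ((x₀/Real.sqrt (2*α) + 1/Real.sqrt (2*α)^2) * Real.exp (-Real.sqrt (2*α)*x₀)) := by
    rw [setIntegral_congr_fun measurableSet_Ioi hφ_eq, integral_const_mul,
      integral_mul_exp (Real.sqrt (2*α)) x₀ hβpos hx₀.le]
  -- rewrite LHS with F
  have lhs_eq : (∫ t in Ioi (0:ℝ), Real.exp (-α * t) *
        ∫ y in Ioi x₀,
          y * (Real.exp (-(y - x) ^ 2 / (2 * t)) - Real.exp (-(y + x) ^ 2 / (2 * t)))
            / Real.sqrt (2 * π * t))
      = ∫ t in Ioi (0:ℝ), ∫ y in Ioi x₀, F t y := by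
    apply setIntegral_congr_fun measurableSet_Ioi
    intro t _
    exact (integral_const_mul _ _).symm
  rw [lhs_eq]
  have hG_meas : AEStronglyMeasurable (fun t => ∫ y in Ioi x₀, F t y)
      (volume.restrict (Ioi 0)) :=
    (hmF.aestronglyMeasurable (μ := (volume.restrict (Ioi 0)).prod
      (volume.restrict (Ioi x₀)))).integral_prod_right'
  have hG_nonneg : 0 ≤ᵐ[volume.restrict (Ioi 0)] (fun t => ∫ y in Ioi x₀, F t y) := by
    filter_upwards [ae_restrict_mem measurableSet_Ioi] with t ht
    simp only [mem_Ioi] at ht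
    apply setIntegral_nonneg measurableSet_Ioi
    intro y hy
    simp only [mem_Ioi] at hy
    exact mul_nonneg (Real.exp_nonneg _) (inner_nonneg x t y hx ht (by linarith))
  rw [integral_eq_lintegral_of_nonneg_ae hG_nonneg hG_meas]
  have step2 : ∫⁻ t in Ioi (0:ℝ), ENNReal.ofReal (∫ y in Ioi x₀, F t y)
      = ∫⁻ t in Ioi (0:ℝ), ∫⁻ y in Ioi x₀, ENNReal.ofReal (F t y) := by
    apply lintegral_congr_ae
    filter_upwards [ae_restrict_mem measurableSet_Ioi] with t ht
    simp only [mem_Ioi] at ht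
    rw [ofReal_integral_eq_lintegral_ofReal]
    · exact (inner_integrable t x x₀ ht hx hxx₀).const_mul (Real.exp (-α*t))
    · filter_upwards [ae_restrict_mem measurableSet_Ioi] with y hy
      simp only [mem_Ioi] at hy
      exact mul_nonneg (Real.exp_nonneg _) (inner_nonneg x t y hx ht (by linarith))
  rw [step2]
  have hswap : AEMeasurable (Function.uncurry fun t y => ENNReal.ofReal (F t y))
      ((volume.restrict (Ioi (0:ℝ))).prod (volume.restrict (Ioi x₀))) :=
    (ENNReal.measurable_ofReal.comp hmF).aemeasurable
  rw [lintegral_lintegral_swap hswap]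
  have step3 : ∫⁻ y in Ioi x₀, ∫⁻ t in Ioi (0:ℝ), ENNReal.ofReal (F t y)
      = ∫⁻ y in Ioi x₀, ENNReal.ofReal (φ y) := by
    apply lintegral_congr_ae
    filter_upwards [ae_restrict_mem measurableSet_Ioi] with y hy
    rw [← ofReal_integral_eq_lintegral_ofReal (ht_int y hy) ?_, ht_val y hy]
    filter_upwards [ae_restrict_mem measurableSet_Ioi] with t ht
    simp only [mem_Ioi] at ht
    simp only [mem_Ioi] at hy
    exact mul_nonneg (Real.exp_nonneg _) (inner_nonneg x t y hx ht (by linarith))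
  rw [step3, ← ofReal_integral_eq_lintegral_ofReal hφ_int hφ_nonneg,
    ENNReal.toReal_ofReal (setIntegral_nonneg_of_ae_restrict hφ_nonneg), hφ_val]
  -- final arithmetic
  have key : (1/Real.sqrt (2*α)) * (x₀/Real.sqrt (2*α) + 1/Real.sqrt (2*α)^2)
      = (1/α) * (1/(2*Real.sqrt (2*α)) + x₀/2) := by
    have h := hβ2
    have hp := hβpos
    revert h hp
    generalize Real.sqrt (2*α) = s
    intro h hp
    have hαs : α = s^2/2 := by linarith
    rw [hαs]
    field_simp
    ring
  linear_combination (Real.exp (-Real.sqrt (2*α)*x₀) *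
    (Real.exp (Real.sqrt (2*α)*x) - Real.exp (-Real.sqrt (2*α)*x))) * key
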